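/- On the combinatorial Fock space (D, ω^{D,q}) of simple directed graphs with the q-weight, the q-commutation relations hold: a(h₁)a*(h₂) − q·a*(h₂)a(h₁) = ⟨h₁,h₂⟩·1 for 0 ≤ q ≤ 1. -/

import Mathlib

open scoped BigOperators

noncomputable section

/-- Vectors of the (unsymmetrized) combinatorial Fock space of a species with level sets
`F n`, over a one-particle space with orthonormal basis indexed by `J`: a level-`n`
component assigns to each structure `f ∈ F[n]` a tensor `K^{⊗n}`, represented by its
coefficients on basis tensors, i.e. a function of colorings `c : Fin n → J`. -/
def CVec (F : ℕ → Type) (J : Type) : Type := ∀ n, F n → (Fin n → J) → ℂ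

/-- Membership in the symmetric Hilbert space `Γ_F(K)`: `φ(F[σ] f) = U(σ) φ(f)`. -/
def IsSymmVec {F : ℕ → Type} {J : Type}
    (ρ : ∀ n, Equiv.Perm (Fin n) → F n → F n) (φ : CVec F J) : Prop :=
  ∀ (n : ℕ) (σ : Equiv.Perm (Fin n)) (f : F n) (c : Fin n → J),
    φ n (ρ n σ f) c = φ n f (c ∘ ⇑σ)

/-- The annihilation operator `a(e_j)` of the combinatorial Fock space with weight `ω`:
`(a(h)φ)(f) = Σ_{g ∈ F[n+1]} ω(f,g) · inp_n(h, φ(g))`. -/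
def ann {F : ℕ → Type} [∀ n, Fintype (F n)] {J : Type}
    (ω : ∀ n, F n → F (n + 1) → ℂ) (j : J) (φ : CVec F J) : CVec F J :=
  fun n f c => ∑ g : F (n + 1), ω n f g * φ (n + 1) g (Fin.snoc c j)

/-- The symmetrized creation operator `a*(e_j)` of the combinatorial Fock space with weight
`ω`: `(a*(h)φ)(f) = Σ_{k=0}^{n} Σ_g conj ω(g, F[τ_{n,k}] f) · U(τ_{n,k})(φ(g) ⊗ h)` for
`f ∈ F[n+1]`, where `τ_{n,k}` is the transposition of `n` and `k`. -/
def cre {F : ℕ → Type} [∀ n, Fintype (F n)] {J : Type} [DecidableEq J]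
    (ρ : ∀ n, Equiv.Perm (Fin n) → F n → F n)
    (ω : ∀ n, F n → F (n + 1) → ℂ) (j : J) (φ : CVec F J) : CVec F J
  | 0 => fun _ _ => 0
  | (m + 1) => fun f c =>
      ∑ k : Fin (m + 1), ∑ g : F m,
        (starRingEnd ℂ) (ω m g (ρ (m + 1) (Equiv.swap (Fin.last m) k) f)) *
          (if c k = j then
            φ m g (fun i => c (Equiv.swap (Fin.last m) k i.castSucc)) else 0)

end

noncomputable section

/-- Level `n` of the species `D` of simple directed graphs: directed graphs on `{0,…,n-1}`
in which any pair of vertices is connected by at most one edge. -/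
abbrev DGraph (n : ℕ) : Type :=
  {g : Fin n → Fin n → Bool // ∀ u v : Fin n, g u v = true → g v u = false}

/-- Transport of directed graphs: `D[σ](g) = (σ × σ)(g)`. -/
def rhoD : ∀ n, Equiv.Perm (Fin n) → DGraph n → DGraph n := fun _ σ g =>
  ⟨fun u v => g.1 (σ.symm u) (σ.symm v), fun u v h => g.2 _ _ h⟩

/-- The number of edges of `g ∈ D[n+1]` going out of the new vertex `* = Fin.last n`. -/
def outDeg {n : ℕ} (g : DGraph (n + 1)) : ℕ :=
  (Finset.univ.filter fun v : Fin n => g.1 (Fin.last n) v.castSucc = true).card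

/-- The `q`-weight on the species of simple directed graphs: `ω^{D,q}(g₁,g₂)` is
`(q^{n-|v_*(g₂)|}(1-q)^{|v_*(g₂)|})^{1/2}` if `g₂` consists of `g₁` together with edges
going out of the new vertex `*`, and `0` otherwise. -/
def omegaD (q : ℝ) : ∀ n, DGraph n → DGraph (n + 1) → ℂ := fun n f g =>
  if (∀ u v : Fin n, g.1 u.castSucc v.castSucc = f.1 u v) ∧
      (∀ u : Fin n, g.1 u.castSucc (Fin.last n) = false)
  then ((Real.sqrt (q ^ (n - outDeg g) * (1 - q) ^ outDeg g) : ℝ) : ℂ)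
  else 0


noncomputable section


lemma DGraph.selfloop {n : ℕ} (g : DGraph n) (x : Fin n) : g.1 x x = false := by
  cases h : g.1 x x with
  | false => rfl
  | true => simpa [h] using g.2 x x h

def extF {n : ℕ} (f : Fin n → Fin n → Bool) (S : Finset (Fin n)) :
    Fin (n+1) → Fin (n+1) → Bool :=
  Fin.lastCases (Fin.lastCases false fun v => decide (v ∈ S))
    (fun u => Fin.lastCases false fun v => f u v)

@[simp] lemma extF_cast_cast {n} (f : Fin n → Fin n → Bool) (S) (u v : Fin n) :
    extF f S u.castSucc v.castSucc = f u v := by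
  simp [extF]

@[simp] lemma extF_last_cast {n} (f : Fin n → Fin n → Bool) (S) (v : Fin n) :
    extF f S (Fin.last n) v.castSucc = decide (v ∈ S) := by
  simp [extF]

@[simp] lemma extF_cast_last {n} (f : Fin n → Fin n → Bool) (S) (u : Fin n) :
    extF f S u.castSucc (Fin.last n) = false := by
  simp [extF]

@[simp] lemma extF_last_last {n} (f : Fin n → Fin n → Bool) (S) :
    extF f S (Fin.last n) (Fin.last n) = false := by
  simp [extF]

def extG {n : ℕ} (f : DGraph n) (S : Finset (Fin n)) : DGraph (n+1) :=
  ⟨extF f.1 S, by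
    intro u v h
    induction u using Fin.lastCases with
    | last =>
      induction v using Fin.lastCases with
      | last => simp
      | cast v => simp
    | cast u =>
      induction v using Fin.lastCases with
      | last => simp at h
      | cast v => simp at h ⊢; exact f.2 u v h⟩

lemma extG_injective {n : ℕ} (f : DGraph n) : Function.Injective (extG f) := by
  intro S T h
  ext v
  have := congrArg (fun g : DGraph (n+1) => g.1 (Fin.last n) v.castSucc) h
  simpa [extG] using this

@[simp] lemma outDeg_extG {n : ℕ} (f : DGraph n) (S : Finset (Fin n)) :
    outDeg (extG f S) = S.card := by
  unfold outDeg
  congr 1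
  ext v
  simp [extG]

lemma omegaD_extG (q : ℝ) {n : ℕ} (f : DGraph n) (S : Finset (Fin n)) :
    omegaD q n f (extG f S) =
      ((Real.sqrt (q ^ (n - S.card) * (1 - q) ^ S.card) : ℝ) : ℂ) := by
  unfold omegaD
  rw [if_pos, outDeg_extG]
  exact ⟨fun u v => by simp [extG], fun u => by simp [extG]⟩

lemma eq_extG {n : ℕ} {f : DGraph n} {g : DGraph (n+1)}
    (h1 : ∀ u v : Fin n, g.1 u.castSucc v.castSucc = f.1 u v)
    (h2 : ∀ u : Fin n, g.1 u.castSucc (Fin.last n) = false) :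
    g = extG f (Finset.univ.filter fun v => g.1 (Fin.last n) v.castSucc = true) := by
  apply Subtype.ext
  funext u v
  induction u using Fin.lastCases with
  | last =>
    induction v using Fin.lastCases with
    | last => simp [extG, g.selfloop]
    | cast v =>
      simp only [extG, extF_last_cast]
      cases hb : g.1 (Fin.last n) v.castSucc <;> simp [hb]
  | cast u =>
    induction v using Fin.lastCases with
    | last => simp [extG, h2 u]
    | cast v => simp [extG, h1 u v]

lemma omegaD_eq_zero {q : ℝ} {n : ℕ} {f : DGraph n} {g : DGraph (n+1)}
    (h : ¬ ((∀ u v : Fin n, g.1 u.castSucc v.castSucc = f.1 u v) ∧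
      (∀ u : Fin n, g.1 u.castSucc (Fin.last n) = false))) : omegaD q n f g = 0 :=
  if_neg h

lemma conj_omegaD (q : ℝ) (n : ℕ) (f : DGraph n) (g : DGraph (n+1)) :
    (starRingEnd ℂ) (omegaD q n f g) = omegaD q n f g := by
  unfold omegaD
  split
  · exact Complex.conj_ofReal _
  · simp

end

noncomputable section

lemma binomSum (q : ℝ) (n : ℕ) :
    ∑ S : Finset (Fin n), q ^ (n - S.card) * (1 - q) ^ S.card = 1 := by
  have h := Finset.prod_add (fun _ : Fin n => (1 - q)) (fun _ => q) Finset.univ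
  simp only [sub_add_cancel, Finset.prod_const_one, Finset.prod_const,
    Finset.card_univ_diff, Finset.powerset_univ, Finset.card_univ, Fintype.card_fin] at h
  simpa [mul_comm] using h.symm

lemma sum_ext (q : ℝ) {n : ℕ} (f : DGraph n) (G : DGraph (n+1) → ℂ) :
    ∑ g : DGraph (n+1), omegaD q n f g * G g
    = ∑ S : Finset (Fin n), omegaD q n f (extG f S) * G (extG f S) := by
  have himg := Finset.sum_image (s := Finset.univ) (g := extG f)
    (f := fun g => omegaD q n f g * G g) (fun S _ T _ h => extG_injective f h)
  rw [← himg]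
  apply (Finset.sum_subset (Finset.subset_univ _) _).symm
  intro g _ hg
  rw [omegaD_eq_zero, zero_mul]
  intro hc
  exact hg (Finset.mem_image.mpr ⟨_, Finset.mem_univ _, (eq_extG hc.1 hc.2).symm⟩)

lemma diag_sum {q : ℝ} (hq0 : 0 ≤ q) (hq1 : q ≤ 1) {n : ℕ} (f : DGraph n)
    (ψ : DGraph n → ℂ) :
    ∑ g : DGraph (n+1), omegaD q n f g * ∑ h : DGraph n, omegaD q n h g * ψ h = ψ f := by
  rw [sum_ext]
  have inner : ∀ S : Finset (Fin n),
      (∑ h : DGraph n, omegaD q n h (extG f S) * ψ h) = omegaD q n f (extG f S) * ψ f := by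
    intro S
    apply Finset.sum_eq_single_of_mem f (Finset.mem_univ f)
    intro h _ hne
    rw [omegaD_eq_zero, zero_mul]
    rintro ⟨h1, -⟩
    apply hne
    apply Subtype.ext; funext u v
    rw [← h1 u v]; simp [extG]
  simp only [inner, omegaD_extG]
  have key : ∀ S : Finset (Fin n),
      (↑(Real.sqrt (q ^ (n - S.card) * (1-q) ^ S.card)) : ℂ) *
        (↑(Real.sqrt (q ^ (n - S.card) * (1-q) ^ S.card)) * ψ f)
      = ((q ^ (n - S.card) * (1-q) ^ S.card : ℝ) : ℂ) * ψ f := by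
    intro S
    rw [← mul_assoc, ← Complex.ofReal_mul,
      Real.mul_self_sqrt (mul_nonneg (pow_nonneg hq0 _) (pow_nonneg (by linarith) _))]
  simp only [key]
  rw [← Finset.sum_mul, ← Complex.ofReal_sum, binomSum, Complex.ofReal_one, one_mul]

end

noncomputable section
open Finset

lemma card_filter_comp_perm {N : ℕ} (σ : Equiv.Perm (Fin N)) (P : Fin N → Prop)
    [DecidablePred P] :
    (univ.filter fun v => P (σ v)).card = (univ.filter P).card := by
  apply Finset.card_bij (fun v _ => σ v)
  · intro v hv; simp at hv ⊢; exact hv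
  · intro a _ b _ hab; exact σ.injective hab
  · intro x hx; exact ⟨σ.symm x, by simpa using hx, by simp⟩

lemma card_filter_fin_succ {N : ℕ} (P : Fin (N+1) → Prop) [DecidablePred P]
    (hlast : ¬ P (Fin.last N)) :
    (univ.filter fun v : Fin N => P v.castSucc).card = (univ.filter P).card := by
  apply Finset.card_bij (fun v _ => v.castSucc)
  · intro v hv; simp at hv ⊢; exact hv
  · intro a _ b _ hab; exact Fin.castSucc_injective N hab
  · intro x hx
    simp only [mem_filter, mem_univ, true_and] at hx
    have hxl : x ≠ Fin.last N := fun hh => hlast (hh ▸ hx)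
    exact ⟨x.castPred hxl, by simpa [Fin.castSucc_castPred] using hx, Fin.castSucc_castPred _ _⟩

lemma card_filter_swapCast {N : ℕ} (j : Fin (N+1)) (P : Fin (N+1) → Prop) [DecidablePred P]
    (hPj : ¬ P j) :
    (univ.filter fun v : Fin N => P (Equiv.swap (Fin.last N) j v.castSucc)).card
    = (univ.filter P).card := by
  rw [card_filter_fin_succ (fun x => P (Equiv.swap (Fin.last N) j x))
      (by simpa [Equiv.swap_apply_left] using hPj)]
  exact card_filter_comp_perm (Equiv.swap (Fin.last N) j) P

lemma card_filter_le_of_not {N : ℕ} (j : Fin (N+1)) (P : Fin (N+1) → Prop) [DecidablePred P]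
    (hPj : ¬ P j) : (univ.filter P).card ≤ N := by
  have hsub : univ.filter P ⊆ univ.erase j := by
    intro x hx
    simp only [mem_filter, mem_univ, true_and] at hx
    simp only [mem_erase, mem_univ, and_true]
    rintro rfl; exact hPj hx
  calc (univ.filter P).card ≤ (univ.erase j).card := Finset.card_le_card hsub
    _ = N := by simp

lemma swap_apply_cast {N : ℕ} (j : Fin (N+1)) {v : Fin N} (h : v.castSucc ≠ j) :
    Equiv.swap (Fin.last N) j v.castSucc = v.castSucc :=
  Equiv.swap_apply_of_ne_of_ne (Fin.castSucc_lt_last v).ne h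

lemma exists_cast_swap {N : ℕ} (j : Fin (N+1)) {x : Fin (N+1)} (hx : x ≠ j) :
    ∃ u : Fin N, Equiv.swap (Fin.last N) j u.castSucc = x := by
  have hs : Equiv.swap (Fin.last N) j x ≠ Fin.last N := by
    intro hh
    apply hx
    have := congrArg (Equiv.swap (Fin.last N) j) hh
    rwa [Equiv.swap_apply_self, Equiv.swap_apply_left] at this
  exact ⟨(Equiv.swap (Fin.last N) j x).castPred hs,
    by rw [Fin.castSucc_castPred, Equiv.swap_apply_self]⟩

lemma rhoD_swap_apply {N : ℕ} (a b : Fin N) (g : DGraph N) (x y : Fin N) :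
    (rhoD N (Equiv.swap a b) g).1 x y
      = g.1 (Equiv.swap a b x) (Equiv.swap a b y) := by
  show g.1 ((Equiv.swap a b).symm x) ((Equiv.swap a b).symm y) = _
  rw [Equiv.symm_swap]

def resG {n : ℕ} (g : DGraph (n+1)) : DGraph n :=
  ⟨fun u v => g.1 u.castSucc v.castSucc, fun u v hh => g.2 _ _ hh⟩

lemma outDeg_rhoD_swap {m : ℕ} (k : Fin (m+1)) (f : DGraph (m+1)) :
    outDeg (rhoD (m+1) (Equiv.swap (Fin.last m) k) f)
    = (univ.filter fun x => f.1 k x = true).card := by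
  unfold outDeg
  have : ∀ v : Fin m, (rhoD (m+1) (Equiv.swap (Fin.last m) k) f).1 (Fin.last m) v.castSucc
      = f.1 k (Equiv.swap (Fin.last m) k v.castSucc) := by
    intro v
    rw [rhoD_swap_apply, Equiv.swap_apply_left]
  simp only [this]
  exact card_filter_swapCast k (fun x => f.1 k x = true) (by simp [f.selfloop])

end

noncomputable section
open Finset

lemma offdiag_sum {q : ℝ} (hq0 : 0 ≤ q) {m : ℕ} (k : Fin (m+1)) (f h : DGraph (m+1)) :
    ∑ g : DGraph (m+2), omegaD q (m+1) f g *
        omegaD q (m+1) h (rhoD (m+2) (Equiv.swap (Fin.last (m+1)) k.castSucc) g)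
    = (q : ℂ) * ∑ p : DGraph m,
        omegaD q m p (rhoD (m+1) (Equiv.swap (Fin.last m) k) f) *
        omegaD q m p (rhoD (m+1) (Equiv.swap (Fin.last m) k) h) := by
  set τ := Equiv.swap (Fin.last (m+1)) k.castSucc with hτ
  set σ := Equiv.swap (Fin.last m) k with hσ
  set S₀ : Finset (Fin (m+1)) := univ.filter (fun v => h.1 k v = true) with hS₀
  set g₀ : DGraph (m+2) := extG f S₀ with hg₀
  set f' := rhoD (m+1) σ f with hf'
  set h' := rhoD (m+1) σ h with hh'
  set p₀ := resG f' with hp₀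
  have hτc : ∀ {v : Fin (m+1)}, v ≠ k → τ v.castSucc = v.castSucc := by
    intro v hv
    exact swap_apply_cast _ (by simpa [Fin.castSucc_inj] using hv)
  have hτk : τ k.castSucc = Fin.last (m+1) := Equiv.swap_apply_right _ _
  have hτl : τ (Fin.last (m+1)) = k.castSucc := Equiv.swap_apply_left _ _
  have hσl : σ (Fin.last m) = k := Equiv.swap_apply_left _ _
  have hσnk : ∀ v : Fin m, σ v.castSucc ≠ k := by
    intro v hvv
    have := σ.injective (hvv.trans hσl.symm)
    exact (Fin.castSucc_lt_last v).ne this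
  have hL : (∑ g : DGraph (m+2), omegaD q (m+1) f g * omegaD q (m+1) h (rhoD (m+2) τ g))
      = omegaD q (m+1) f g₀ * omegaD q (m+1) h (rhoD (m+2) τ g₀) := by
    apply Finset.sum_eq_single_of_mem g₀ (mem_univ _)
    intro g _ hg
    by_cases hA : (∀ u v : Fin (m+1), g.1 u.castSucc v.castSucc = f.1 u v) ∧
        (∀ u : Fin (m+1), g.1 u.castSucc (Fin.last (m+1)) = false)
    swap
    · rw [omegaD_eq_zero hA, zero_mul]
    by_cases hB : (∀ u v : Fin (m+1), (rhoD (m+2) τ g).1 u.castSucc v.castSucc = h.1 u v) ∧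
        (∀ u : Fin (m+1), (rhoD (m+2) τ g).1 u.castSucc (Fin.last (m+1)) = false)
    swap
    · rw [omegaD_eq_zero hB, mul_zero]
    exfalso; apply hg
    apply Subtype.ext; funext u v
    induction u using Fin.lastCases with
    | cast u =>
      induction v using Fin.lastCases with
      | last => rw [hA.2 u, hg₀]; simp [extG]
      | cast v => rw [hA.1 u v, hg₀]; simp [extG]
    | last =>
      induction v using Fin.lastCases with
      | last => rw [hg₀]; simp [extG, g.selfloop]
      | cast v =>
        have hrhs : g₀.1 (Fin.last (m+1)) v.castSucc = h.1 k v := by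
          rw [hg₀]; simp [extG, hS₀]
        rw [hrhs]
        by_cases hvk : v = k
        · subst hvk
          have h1 := hB.2 v
          rw [hτ] at h1
          rw [rhoD_swap_apply] at h1
          rw [← hτ] at h1
          rw [hτk, hτl] at h1
          rw [h1, h.selfloop]
        · have h1 := hB.1 k v
          rw [hτ] at h1
          rw [rhoD_swap_apply] at h1
          rw [← hτ] at h1
          rw [hτk, hτc hvk] at h1
          exact h1
  have hR : (∑ p : DGraph m, omegaD q m p f' * omegaD q m p h')
      = omegaD q m p₀ f' * omegaD q m p₀ h' := by
    apply Finset.sum_eq_single_of_mem p₀ (mem_univ _)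
    intro p _ hp
    by_cases hA : (∀ u v : Fin m, f'.1 u.castSucc v.castSucc = p.1 u v) ∧
        (∀ u : Fin m, f'.1 u.castSucc (Fin.last m) = false)
    · exfalso; apply hp; apply Subtype.ext; funext u v
      rw [← hA.1 u v, hp₀]; rfl
    · rw [omegaD_eq_zero hA, zero_mul]
  rw [hL, hR]
  by_cases hCf : ∀ x, f.1 x k = false
  swap
  · push_neg at hCf
    obtain ⟨x, hx⟩ := hCf
    replace hx : f.1 x k = true := by simpa using hx
    have hxk : x ≠ k := by rintro rfl; rw [f.selfloop] at hx; cases hx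
    have hz1 : omegaD q (m+1) h (rhoD (m+2) τ g₀) = 0 := by
      apply omegaD_eq_zero
      rintro ⟨-, h2⟩
      have h3 := h2 x
      rw [hτ, rhoD_swap_apply, ← hτ, hτc hxk, hτl, hg₀] at h3
      simp only [extG, extF_cast_cast] at h3
      rw [hx] at h3; cases h3
    obtain ⟨u, hu⟩ := exists_cast_swap k hxk
    have hz2 : omegaD q m p₀ f' = 0 := by
      apply omegaD_eq_zero
      rintro ⟨-, h2⟩
      have h3 := h2 u
      rw [hf', hσ, rhoD_swap_apply, ← hσ, hu, hσl] at h3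
      rw [hx] at h3; cases h3
    rw [hz1, hz2, mul_zero, zero_mul, mul_zero]
  by_cases hCh : ∀ x, h.1 x k = false
  swap
  · push_neg at hCh
    obtain ⟨x, hx⟩ := hCh
    replace hx : h.1 x k = true := by simpa using hx
    have hxk : x ≠ k := by rintro rfl; rw [h.selfloop] at hx; cases hx
    have hz1 : omegaD q (m+1) h (rhoD (m+2) τ g₀) = 0 := by
      apply omegaD_eq_zero
      rintro ⟨h1, -⟩
      have h3 := h1 x k
      rw [hτ, rhoD_swap_apply, ← hτ, hτc hxk, hτk, hg₀] at h3
      simp only [extG, extF_cast_last] at h3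
      rw [hx] at h3; cases h3
    obtain ⟨u, hu⟩ := exists_cast_swap k hxk
    have hz2 : omegaD q m p₀ h' = 0 := by
      apply omegaD_eq_zero
      rintro ⟨-, h2⟩
      have h3 := h2 u
      rw [hh', hσ, rhoD_swap_apply, ← hσ, hu, hσl] at h3
      rw [hx] at h3; cases h3
    rw [hz1, hz2, mul_zero, mul_zero, mul_zero]
  by_cases hAgr : ∀ u v : Fin (m+1), u ≠ k → v ≠ k → f.1 u v = h.1 u v
  swap
  · push_neg at hAgr
    obtain ⟨u, v, huk, hvk, hne⟩ := hAgr
    have hz1 : omegaD q (m+1) h (rhoD (m+2) τ g₀) = 0 := by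
      apply omegaD_eq_zero
      rintro ⟨h1, -⟩
      have h3 := h1 u v
      rw [hτ, rhoD_swap_apply, ← hτ, hτc huk, hτc hvk, hg₀] at h3
      simp only [extG, extF_cast_cast] at h3
      exact hne h3
    obtain ⟨u', hu'⟩ := exists_cast_swap k huk
    obtain ⟨v', hv'⟩ := exists_cast_swap k hvk
    have hz2 : omegaD q m p₀ h' = 0 := by
      apply omegaD_eq_zero
      rintro ⟨h1, -⟩
      have h3 := h1 u' v'
      rw [hh', hσ, rhoD_swap_apply, ← hσ, hu', hv'] at h3
      have h4 : p₀.1 u' v' = f.1 u v := by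
        rw [hp₀, hf']
        show f.1 (σ.symm u'.castSucc) (σ.symm v'.castSucc) = _
        rw [hσ, Equiv.symm_swap, ← hσ, hu', hv']
      rw [h4] at h3
      exact hne h3.symm
    rw [hz1, hz2, mul_zero, mul_zero, mul_zero]
  set a := (univ.filter fun x : Fin (m+1) => f.1 k x = true).card with ha_def
  set b := (univ.filter fun x : Fin (m+1) => h.1 k x = true).card with hb_def
  have ha : a ≤ m := card_filter_le_of_not k _ (by simp [f.selfloop])
  have hb : b ≤ m := card_filter_le_of_not k _ (by simp [h.selfloop])
  have hbS : S₀.card = b := by rw [hS₀, hb_def]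
  have e1 : omegaD q (m+1) f g₀ = ((Real.sqrt (q ^ (m+1-b) * (1-q) ^ b) : ℝ) : ℂ) := by
    rw [hg₀, omegaD_extG, hbS]
  have cond2 : (∀ u v : Fin (m+1), (rhoD (m+2) τ g₀).1 u.castSucc v.castSucc = h.1 u v) ∧
      (∀ u : Fin (m+1), (rhoD (m+2) τ g₀).1 u.castSucc (Fin.last (m+1)) = false) := by
    constructor
    · intro u v
      rw [hτ, rhoD_swap_apply, ← hτ]
      by_cases huk : u = k
      · subst huk
        rw [hτk]
        by_cases hvk : v = u
        · subst hvk; rw [hτk, hg₀]; simp [extG, h.selfloop]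
        · rw [hτc hvk, hg₀]; simp [extG, hS₀]
      · rw [hτc huk]
        by_cases hvk : v = k
        · subst hvk; rw [hτk, hg₀]; simp [extG, (hCh u).symm]
        · rw [hτc hvk, hg₀]; simp [extG]; exact hAgr u v huk hvk
    · intro u
      rw [hτ, rhoD_swap_apply, ← hτ, hτl]
      by_cases huk : u = k
      · subst huk; rw [hτk, hg₀]; simp [extG, hS₀, h.selfloop]
      · rw [hτc huk, hg₀]; simp [extG, hCf u]
  have hdeg : outDeg (rhoD (m+2) τ g₀) = a := by
    unfold outDeg
    have hrow : ∀ v : Fin (m+1),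
        (rhoD (m+2) τ g₀).1 (Fin.last (m+1)) v.castSucc = g₀.1 k.castSucc (τ v.castSucc) := by
      intro v; rw [hτ, rhoD_swap_apply, ← hτ, hτl]
    simp only [hrow]
    simp only [hτ]
    rw [card_filter_swapCast k.castSucc (fun x => g₀.1 k.castSucc x = true)
        (by rw [hg₀]; simp [(extG f S₀).selfloop])]
    rw [← card_filter_fin_succ (fun x => g₀.1 k.castSucc x = true)
        (by rw [hg₀]; simp [extG])]
    have hrow2 : ∀ v : Fin (m+1), g₀.1 k.castSucc v.castSucc = f.1 k v := by
      intro v; rw [hg₀]; simp [extG]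
    simp only [hrow2]
    rw [ha_def]
  have e2 : omegaD q (m+1) h (rhoD (m+2) τ g₀)
      = ((Real.sqrt (q ^ (m+1-a) * (1-q) ^ a) : ℝ) : ℂ) := by
    unfold omegaD; rw [if_pos cond2, hdeg]
  have cond3 : (∀ u v : Fin m, f'.1 u.castSucc v.castSucc = p₀.1 u v) ∧
      (∀ u : Fin m, f'.1 u.castSucc (Fin.last m) = false) := by
    constructor
    · intro u v; rw [hp₀]; rfl
    · intro u
      rw [hf', hσ, rhoD_swap_apply, ← hσ, hσl]
      exact hCf _
  have hdeg3 : outDeg f' = a := by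
    rw [hf', hσ, outDeg_rhoD_swap, ha_def]
  have e3 : omegaD q m p₀ f' = ((Real.sqrt (q ^ (m-a) * (1-q) ^ a) : ℝ) : ℂ) := by
    unfold omegaD
    rw [if_pos cond3, hdeg3]
  have cond4 : (∀ u v : Fin m, h'.1 u.castSucc v.castSucc = p₀.1 u v) ∧
      (∀ u : Fin m, h'.1 u.castSucc (Fin.last m) = false) := by
    constructor
    · intro u v
      rw [hh', hσ, rhoD_swap_apply, ← hσ, hp₀]
      have hres : (resG f').1 u v = f.1 (σ u.castSucc) (σ v.castSucc) := by
        rw [hf']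
        show f.1 (σ.symm u.castSucc) (σ.symm v.castSucc) = _
        rw [hσ, Equiv.symm_swap]
      rw [hres]
      exact (hAgr _ _ (hσnk u) (hσnk v)).symm
    · intro u
      rw [hh', hσ, rhoD_swap_apply, ← hσ, hσl]
      exact hCh _
  have hdeg4 : outDeg h' = b := by
    rw [hh', hσ, outDeg_rhoD_swap, hb_def]
  have e4 : omegaD q m p₀ h' = ((Real.sqrt (q ^ (m-b) * (1-q) ^ b) : ℝ) : ℂ) := by
    unfold omegaD
    rw [if_pos cond4, hdeg4]
  rw [e1, e2, e3, e4]
  rw [← Complex.ofReal_mul, ← Complex.ofReal_mul, ← Complex.ofReal_mul]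
  congr 1
  have key : ∀ c : ℕ, c ≤ m → q ^ (m+1-c) * (1-q) ^ c = q * (q ^ (m-c) * (1-q) ^ c) := by
    intro c hc
    rw [show m + 1 - c = (m - c) + 1 from by omega, pow_succ]
    ring
  rw [key a ha, key b hb, Real.sqrt_mul hq0, Real.sqrt_mul hq0]
  have hss : Real.sqrt q * Real.sqrt q = q := Real.mul_self_sqrt hq0
  calc (Real.sqrt q * Real.sqrt (q ^ (m-b) * (1-q) ^ b)) *
        (Real.sqrt q * Real.sqrt (q ^ (m-a) * (1-q) ^ a))
      = (Real.sqrt q * Real.sqrt q) *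
        (Real.sqrt (q ^ (m-a) * (1-q) ^ a) * Real.sqrt (q ^ (m-b) * (1-q) ^ b)) := by ring
    _ = q * (Real.sqrt (q ^ (m-a) * (1-q) ^ a) * Real.sqrt (q ^ (m-b) * (1-q) ^ b)) := by
        rw [hss]


end

noncomputable section
open Finset

lemma rhoD_swap_invol {N : ℕ} (a b : Fin N) :
    Function.Involutive (rhoD N (Equiv.swap a b)) := by
  intro g
  apply Subtype.ext
  funext u v
  show g.1 ((Equiv.swap a b).symm ((Equiv.swap a b).symm u))
      ((Equiv.swap a b).symm ((Equiv.swap a b).symm v)) = _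
  simp [Equiv.symm_swap, Equiv.swap_apply_self]

lemma swap_cast_ne {N : ℕ} (k : Fin (N+1)) (v : Fin N) :
    Equiv.swap (Fin.last N) k v.castSucc ≠ k := by
  intro hvv
  have := (Equiv.swap (Fin.last N) k).injective (hvv.trans (Equiv.swap_apply_left _ _).symm)
  exact (Fin.castSucc_lt_last v).ne this

lemma rhoD_refl {N : ℕ} (g : DGraph N) : rhoD N (Equiv.refl (Fin N)) g = g := rfl

lemma offdiag_full {q : ℝ} (hq0 : 0 ≤ q) {m : ℕ} (k : Fin (m+1)) (f : DGraph (m+1))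
    (ψ : DGraph (m+1) → ℂ) :
    ∑ g : DGraph (m+2), ∑ h : DGraph (m+1),
        omegaD q (m+1) f g *
          (omegaD q (m+1) h (rhoD (m+2) (Equiv.swap (Fin.last (m+1)) k.castSucc) g) * ψ h)
    = (q:ℂ) * ∑ p : DGraph m,
        omegaD q m p (rhoD (m+1) (Equiv.swap (Fin.last m) k) f) *
        ∑ h : DGraph (m+1), omegaD q m p (rhoD (m+1) (Equiv.swap (Fin.last m) k) h) * ψ h := by
  rw [Finset.sum_comm]
  calc ∑ h : DGraph (m+1), ∑ g : DGraph (m+2),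
        omegaD q (m+1) f g *
          (omegaD q (m+1) h (rhoD (m+2) (Equiv.swap (Fin.last (m+1)) k.castSucc) g) * ψ h)
      = ∑ h : DGraph (m+1), (∑ g : DGraph (m+2), omegaD q (m+1) f g *
          omegaD q (m+1) h (rhoD (m+2) (Equiv.swap (Fin.last (m+1)) k.castSucc) g)) * ψ h := by
        refine Finset.sum_congr rfl fun h _ => ?_
        rw [Finset.sum_mul]
        exact Finset.sum_congr rfl fun g _ => by ring
    _ = ∑ h : DGraph (m+1), ((q:ℂ) * ∑ p : DGraph m,
          omegaD q m p (rhoD (m+1) (Equiv.swap (Fin.last m) k) f) *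
          omegaD q m p (rhoD (m+1) (Equiv.swap (Fin.last m) k) h)) * ψ h := by
        refine Finset.sum_congr rfl fun h _ => ?_
        rw [offdiag_sum hq0 k f h]
    _ = ∑ h : DGraph (m+1), ∑ p : DGraph m, (q:ℂ) *
          (omegaD q m p (rhoD (m+1) (Equiv.swap (Fin.last m) k) f) *
          (omegaD q m p (rhoD (m+1) (Equiv.swap (Fin.last m) k) h) * ψ h)) := by
        refine Finset.sum_congr rfl fun h _ => ?_
        rw [Finset.mul_sum, Finset.sum_mul]
        exact Finset.sum_congr rfl fun p _ => by ring
    _ = ∑ p : DGraph m, ∑ h : DGraph (m+1), (q:ℂ) *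
          (omegaD q m p (rhoD (m+1) (Equiv.swap (Fin.last m) k) f) *
          (omegaD q m p (rhoD (m+1) (Equiv.swap (Fin.last m) k) h) * ψ h)) := Finset.sum_comm
    _ = (q:ℂ) * ∑ p : DGraph m,
          omegaD q m p (rhoD (m+1) (Equiv.swap (Fin.last m) k) f) *
          ∑ h : DGraph (m+1), omegaD q m p (rhoD (m+1) (Equiv.swap (Fin.last m) k) h) * ψ h := by
        simp only [Finset.mul_sum]

end


/-- On the combinatorial Fock space `(D, ω^{D,q})` of simple directed graphs
with the `q`-weight, `0 ≤ q ≤ 1`, the `q`-commutation relations hold: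
`a(h₁)a*(h₂) − q·a*(h₂)a(h₁) = ⟨h₁,h₂⟩·1` (stated on basis vectors `h₁ = e_{j₁}`,
`h₂ = e_{j₂}`, so `⟨h₁,h₂⟩ = δ_{j₁ j₂}`). -/

theorem digraphs_q_commutation {J : Type} [DecidableEq J]
    (q : ℝ) (hq0 : 0 ≤ q) (hq1 : q ≤ 1)
    (φ : CVec DGraph J) (hφ : IsSymmVec rhoD φ) (j₁ j₂ : J)
    (n : ℕ) (f : DGraph n) (c : Fin n → J) :
    ann (omegaD q) j₁ (cre rhoD (omegaD q) j₂ φ) n f c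
      - (q : ℂ) * cre rhoD (omegaD q) j₂ (ann (omegaD q) j₁ φ) n f c
      = (if j₁ = j₂ then (1 : ℂ) else 0) * φ n f c := by
  have hexp : ann (omegaD q) j₁ (cre rhoD (omegaD q) j₂ φ) n f c
      = ∑ k : Fin (n+1), ∑ g : DGraph (n+1), ∑ h : DGraph n,
          omegaD q n f g *
            (omegaD q n h (rhoD (n+1) (Equiv.swap (Fin.last n) k) g) *
              (if (Fin.snoc c j₁ : Fin _ → J) k = j₂ then
                φ n h (fun i => (Fin.snoc c j₁ : Fin _ → J) (Equiv.swap (Fin.last n) k i.castSucc)) else 0)) := by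
    simp only [ann, cre, conj_omegaD, Finset.mul_sum]
    rw [Finset.sum_comm]
  rw [hexp, Fin.sum_univ_castSucc]
  have hdiag : (∑ g : DGraph (n+1), ∑ h : DGraph n,
          omegaD q n f g *
            (omegaD q n h (rhoD (n+1) (Equiv.swap (Fin.last n) (Fin.last n)) g) *
              (if (Fin.snoc c j₁ : Fin _ → J) (Fin.last n) = j₂ then
                φ n h (fun i => (Fin.snoc c j₁ : Fin _ → J) (Equiv.swap (Fin.last n) (Fin.last n) i.castSucc))
              else 0)))
      = (if j₁ = j₂ then (1:ℂ) else 0) * φ n f c := by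
    have hcol : (fun i : Fin n =>
        (Fin.snoc c j₁ : Fin _ → J) ((Equiv.refl (Fin (n+1))) i.castSucc)) = c := by
      funext i
      simp [Fin.snoc_castSucc]
    simp only [Equiv.swap_self, rhoD_refl, Fin.snoc_last, hcol]
    by_cases hj : j₁ = j₂
    · simp only [if_pos hj, one_mul]
      simp only [← Finset.mul_sum]
      exact diag_sum hq0 hq1 f (fun h => φ n h c)
    · simp [if_neg hj]
  have hoff : (∑ k : Fin n, ∑ g : DGraph (n+1), ∑ h : DGraph n,
          omegaD q n f g *
            (omegaD q n h (rhoD (n+1) (Equiv.swap (Fin.last n) k.castSucc) g) *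
              (if (Fin.snoc c j₁ : Fin _ → J) k.castSucc = j₂ then
                φ n h (fun i => (Fin.snoc c j₁ : Fin _ → J) (Equiv.swap (Fin.last n) k.castSucc i.castSucc))
              else 0)))
      = (q : ℂ) * cre rhoD (omegaD q) j₂ (ann (omegaD q) j₁ φ) n f c := by
    cases n with
    | zero => simp [cre]
    | succ m =>
      simp only [cre, ann, conj_omegaD]
      rw [Finset.mul_sum]
      refine Finset.sum_congr rfl fun k _ => ?_
      have hcolL : (fun i : Fin (m+1) =>
          (Fin.snoc c j₁ : Fin _ → J) (Equiv.swap (Fin.last (m+1)) k.castSucc i.castSucc))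
          = Function.update c k j₁ := by
        funext i
        by_cases hik : i = k
        · rw [hik, Equiv.swap_apply_right, Fin.snoc_last, Function.update_self]
        · rw [swap_apply_cast _ (by simpa [Fin.castSucc_inj] using hik), Fin.snoc_castSucc,
            Function.update_of_ne hik]
      have hcolR : (Fin.snoc (fun i : Fin m =>
            c (Equiv.swap (Fin.last m) k i.castSucc)) j₁ : Fin (m+1) → J)
          = Function.update c k j₁ ∘ (Equiv.swap (Fin.last m) k) := by
        funext x
        induction x using Fin.lastCases with
        | last =>
          simp only [Fin.snoc_last, Function.comp_apply]
          rw [Equiv.swap_apply_left, Function.update_self]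
        | cast i =>
          simp only [Fin.snoc_castSucc, Function.comp_apply]
          rw [Function.update_of_ne (swap_cast_ne k i)]
      have hφ' : ∀ (N : ℕ) (σ : Equiv.Perm (Fin N)) (f : DGraph N) (c : Fin N → J),
          φ N (rhoD N σ f) c = φ N f (c ∘ ⇑σ) := hφ
      simp only [Fin.snoc_castSucc, hcolL, hcolR, ← hφ']
      by_cases hck : c k = j₂
      · simp only [if_pos hck]
        have hre : ∀ p : DGraph m,
            (∑ h' : DGraph (m+1), omegaD q m p h' *
              φ (m+1) (rhoD (m+1) (Equiv.swap (Fin.last m) k) h') (Function.update c k j₁))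
            = ∑ h : DGraph (m+1),
                omegaD q m p (rhoD (m+1) (Equiv.swap (Fin.last m) k) h) *
                  φ (m+1) h (Function.update c k j₁) := by
          intro p
          refine (Fintype.sum_bijective (rhoD (m+1) (Equiv.swap (Fin.last m) k))
            (rhoD_swap_invol _ _).bijective _ _ fun h => ?_).symm
          rw [rhoD_swap_invol]
        simp only [hre]
        exact offdiag_full hq0 k f (fun h => φ (m+1) h (Function.update c k j₁))
      · simp [if_neg hck]
  rw [hoff, hdiag]
  ring

end
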